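/- Conversely to the previous statement: let X = (X_v, v ∈ V) be a discrete random vector with strictly positive joint distribution and {A,B} a partition of V. If for every subset M ⊆ V intersecting both A and B the highest-order marginal log-linear interaction λ^M_M vanishes identically, then X_A and X_B are independent. -/

import Mathlib

open Finset

/-- The marginal distribution of `p` over the margin `M`, as a function of a full cell
depending only on its `M`-coordinates. -/
noncomputable def marg {V : Type*} [Fintype V] [DecidableEq V] {b : V → ℕ}
    (p : ((v : V) → Fin (b v)) → ℝ) (M : Finset V) (i : (v : V) → Fin (b v)) : ℝ :=
  ∑ k : (v : V) → Fin (b v), if ∀ v ∈ M, k v = i v then p k else 0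

/-- The multivariate logistic parameter `η^M = λ^M_M`: the highest-order log-linear
interaction of the marginal distribution `p_M`, obtained by Möbius inversion of
`log p_M` with baseline cell `(0,...,0)`. -/
noncomputable def mlogit {V : Type*} [Fintype V] [DecidableEq V] {b : V → ℕ}
    (hb : ∀ v, 0 < b v) (p : ((v : V) → Fin (b v)) → ℝ)
    (M : Finset V) (i : (v : V) → Fin (b v)) : ℝ :=
  ∑ L ∈ M.powerset, (-1 : ℝ) ^ (M.card - L.card) *
    Real.log (marg p M (fun v => if v ∈ L then i v else ⟨0, hb v⟩))

section Aux
set_option linter.unusedSectionVars false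
variable {V : Type*} [Fintype V] [DecidableEq V] {b : V → ℕ}

/-- baseline-substituted cell -/
noncomputable def base (hb : ∀ v, 0 < b v) (K : Finset V) (i : (v : V) → Fin (b v)) :
    (v : V) → Fin (b v) :=
  fun v => if v ∈ K then i v else ⟨0, hb v⟩

def merge (MA : Finset V) (k j : (v : V) → Fin (b v)) : (v : V) → Fin (b v) :=
  fun v => if v ∈ MA then k v else j v

lemma base_agree (hb : ∀ v, 0 < b v) {K L : Finset V} (hKL : K ⊆ L)
    {i j : (v : V) → Fin (b v)} (hij : ∀ v ∈ L, i v = j v) :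
    base hb K i = base hb K j := by
  funext v
  unfold base
  by_cases hv : v ∈ K
  · simp [hv, hij v (hKL hv)]
  · simp [hv]

lemma marg_congr (p : ((v : V) → Fin (b v)) → ℝ) (M : Finset V)
    {i j : (v : V) → Fin (b v)} (hij : ∀ v ∈ M, i v = j v) :
    marg p M i = marg p M j := by
  unfold marg
  apply Finset.sum_congr rfl
  intro k _
  have : (∀ v ∈ M, k v = i v) = (∀ v ∈ M, k v = j v) :=
    propext ⟨fun H v hv => (H v hv).trans (hij v hv),
             fun H v hv => (H v hv).trans (hij v hv).symm⟩
  exact if_congr (iff_of_eq this) rfl rfl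

lemma marg_pos {p : ((v : V) → Fin (b v)) → ℝ} (hpos : ∀ i, 0 < p i)
    (M : Finset V) (i : (v : V) → Fin (b v)) : 0 < marg p M i := by
  unfold marg
  apply Finset.sum_pos'
  · intro k _
    split_ifs
    · exact (hpos k).le
    · exact le_refl 0
  · refine ⟨i, Finset.mem_univ i, ?_⟩
    rw [if_pos (fun v _ => rfl)]
    exact hpos i

lemma marg_empty {p : ((v : V) → Fin (b v)) → ℝ} (hsum : ∑ i, p i = 1)
    (i : (v : V) → Fin (b v)) : marg p ∅ i = 1 := by
  unfold marg
  simp only [Finset.notMem_empty, false_implies, implies_true, if_true]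
  exact hsum

lemma marg_univ (p : ((v : V) → Fin (b v)) → ℝ) (i : (v : V) → Fin (b v)) :
    marg p Finset.univ i = p i := by
  unfold marg
  have h : ∀ k : (v : V) → Fin (b v), (∀ v ∈ Finset.univ, k v = i v) ↔ k = i := by
    intro k
    constructor
    · intro H; funext v; exact H v (Finset.mem_univ v)
    · intro H v _; rw [H]
  simp only [h]
  rw [Finset.sum_ite_eq' Finset.univ i p, if_pos (Finset.mem_univ i)]

lemma cnt (T : Finset V) (k : (v : V) → Fin (b v)) :
    (∑ i : (v : V) → Fin (b v), if ∀ v ∈ T, i v = k v then (1:ℝ) else 0)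
      = ∏ v ∈ Tᶜ, (b v : ℝ) := by
  have h1 : ∀ i : (v : V) → Fin (b v),
      (if ∀ v ∈ T, i v = k v then (1:ℝ) else 0)
        = ∏ v, (if v ∈ T then (if i v = k v then (1:ℝ) else 0) else 1) := by
    intro i
    rw [Finset.prod_ite_mem, Finset.univ_inter, Finset.prod_boole]
    congr 1
  simp_rw [h1]
  have h3 := Finset.prod_univ_sum (fun v : V => (univ : Finset (Fin (b v))))
    (fun v x => if v ∈ T then (if x = k v then (1:ℝ) else 0) else 1)
  rw [← Fintype.piFinset_univ, ← h3]
  have h2 : ∀ v : V, (∑ x : Fin (b v), if v ∈ T then (if x = k v then (1:ℝ) else 0) else 1)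
      = if v ∈ Tᶜ then (b v : ℝ) else 1 := by
    intro v
    by_cases hv : v ∈ T <;> simp [hv]
  simp_rw [h2]
  rw [Finset.prod_ite_mem, Finset.univ_inter]

/-- F1: integrating a T-invariant function against a margin -/
lemma pull (w : ((v : V) → Fin (b v)) → ℝ) (T : Finset V) (h : ((v : V) → Fin (b v)) → ℝ)
    (hh : ∀ i j, (∀ v ∈ T, i v = j v) → h i = h j) :
    ∑ i, marg w T i * h i = (∏ v ∈ Tᶜ, (b v : ℝ)) * ∑ k, w k * h k := by
  unfold marg
  simp_rw [Finset.sum_mul]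
  rw [Finset.sum_comm]
  have step : ∀ k : (v : V) → Fin (b v),
      (∑ i : (v : V) → Fin (b v), (if ∀ v ∈ T, k v = i v then w k else 0) * h i)
        = (∏ v ∈ Tᶜ, (b v : ℝ)) * (w k * h k) := by
    intro k
    have : ∀ i : (v : V) → Fin (b v),
        (if ∀ v ∈ T, k v = i v then w k else 0) * h i
          = (w k * h k) * (if ∀ v ∈ T, i v = k v then (1:ℝ) else 0) := by
      intro i
      by_cases hc : ∀ v ∈ T, k v = i v
      · have hc' : ∀ v ∈ T, i v = k v := fun v hv => (hc v hv).symm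
        rw [if_pos hc, if_pos hc', hh i k hc', mul_one]
      · have hc' : ¬ ∀ v ∈ T, i v = k v := fun H => hc (fun v hv => (H v hv).symm)
        rw [if_neg hc, if_neg hc', zero_mul, mul_zero]
    simp_rw [this]
    rw [← Finset.mul_sum, cnt]
    ring
  simp_rw [step]
  rw [← Finset.mul_sum]

lemma merge_agree {MA MB : Finset V} (hd : Disjoint MA MB) (k j i : (v : V) → Fin (b v)) :
    ((∀ v ∈ MA, k v = i v) ∧ (∀ v ∈ MB, j v = i v))
      ↔ ∀ v ∈ MA ∪ MB, merge MA k j v = i v := by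
  constructor
  · rintro ⟨h1, h2⟩ v hv
    rcases Finset.mem_union.mp hv with hA | hB
    · simp [merge, hA, h1 v hA]
    · have : v ∉ MA := fun hA => (Finset.disjoint_left.mp hd hA) hB
      simp [merge, this, h2 v hB]
  · intro H
    constructor
    · intro v hv
      have := H v (Finset.mem_union_left _ hv)
      simpa [merge, hv] using this
    · intro v hv
      have hvA : v ∉ MA := fun hA => (Finset.disjoint_left.mp hd hA) hv
      have := H v (Finset.mem_union_right _ hv)
      simpa [merge, hvA] using this

/-- F2: integrating against a product of two margins over disjoint sets -/
lemma split (p : ((v : V) → Fin (b v)) → ℝ) {MA MB : Finset V} (hd : Disjoint MA MB)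
    (h : ((v : V) → Fin (b v)) → ℝ)
    (hh : ∀ i j, (∀ v ∈ MA ∪ MB, i v = j v) → h i = h j) :
    ∑ i, marg p MA i * marg p MB i * h i
      = (∏ v ∈ (MA ∪ MB)ᶜ, (b v : ℝ)) * ∑ k, ∑ j, p k * p j * h (merge MA k j) := by
  unfold marg
  simp_rw [Finset.sum_mul]
  rw [Finset.sum_comm]
  have step : ∀ k : (v : V) → Fin (b v),
      (∑ i : (v : V) → Fin (b v),
        (if ∀ v ∈ MA, k v = i v then p k else 0) *
          (∑ j : (v : V) → Fin (b v), if ∀ v ∈ MB, j v = i v then p j else 0) * h i)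
      = (∏ v ∈ (MA ∪ MB)ᶜ, (b v : ℝ)) * ∑ j, p k * p j * h (merge MA k j) := by
    intro k
    simp_rw [Finset.mul_sum, Finset.sum_mul]
    rw [Finset.sum_comm]
    have inner : ∀ j : (v : V) → Fin (b v),
        (∑ i : (v : V) → Fin (b v),
          (if ∀ v ∈ MA, k v = i v then p k else 0) *
            (if ∀ v ∈ MB, j v = i v then p j else 0) * h i)
        = (∏ v ∈ (MA ∪ MB)ᶜ, (b v : ℝ)) * (p k * p j * h (merge MA k j)) := by
      intro j
      have : ∀ i : (v : V) → Fin (b v),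
          (if ∀ v ∈ MA, k v = i v then p k else 0) *
            (if ∀ v ∈ MB, j v = i v then p j else 0) * h i
          = (p k * p j * h (merge MA k j)) *
              (if ∀ v ∈ MA ∪ MB, i v = merge MA k j v then (1:ℝ) else 0) := by
        intro i
        by_cases hc : (∀ v ∈ MA, k v = i v) ∧ (∀ v ∈ MB, j v = i v)
        · have hm : ∀ v ∈ MA ∪ MB, merge MA k j v = i v := (merge_agree hd k j i).mp hc
          have hm' : ∀ v ∈ MA ∪ MB, i v = merge MA k j v := fun v hv => (hm v hv).symm
          rw [if_pos hc.1, if_pos hc.2, if_pos hm', hh i (merge MA k j) hm', mul_one]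
        · have hm' : ¬ ∀ v ∈ MA ∪ MB, i v = merge MA k j v := by
            intro H
            exact hc ((merge_agree hd k j i).mpr (fun v hv => (H v hv).symm))
          rw [if_neg hm', mul_zero]
          rcases not_and_or.mp hc with h1 | h2
          · rw [if_neg h1, zero_mul, zero_mul]
          · rw [if_neg h2, mul_zero, zero_mul]
      simp_rw [this]
      rw [← Finset.mul_sum, cnt]
      ring
    simp_rw [inner]
  simp_rw [step]
  rw [← Finset.mul_sum]

/-- margin matching: if the L-margin factorizes, then integrating an L-invariant
function against the M-margin or against the product of the MA,MB margins agree. -/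
lemma margmatch (hb : ∀ v, 0 < b v) (p : ((v : V) → Fin (b v)) → ℝ)
    {MA MB LA LB : Finset V} (hd : Disjoint MA MB) (hLA : LA ⊆ MA) (hLB : LB ⊆ MB)
    (h : ((v : V) → Fin (b v)) → ℝ)
    (hh : ∀ i j, (∀ v ∈ LA ∪ LB, i v = j v) → h i = h j)
    (IH : ∀ i, marg p (LA ∪ LB) i = marg p LA i * marg p LB i) :
    ∑ i, marg p (MA ∪ MB) i * h i = ∑ i, marg p MA i * marg p MB i * h i := by
  have hdL : Disjoint LA LB := Finset.disjoint_of_subset_left hLA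
    (Finset.disjoint_of_subset_right hLB hd)
  have hhM : ∀ i j, (∀ v ∈ MA ∪ MB, i v = j v) → h i = h j := fun i j hij =>
    hh i j (fun v hv => hij v (Finset.union_subset_union hLA hLB hv))
  have e1 := pull p (MA ∪ MB) h hhM
  have e2 := pull p (LA ∪ LB) h hh
  have e3 := split p hdL h hh
  have e4 : ∀ k j : (v : V) → Fin (b v), h (merge LA k j) = h (merge MA k j) := by
    intro k j
    apply hh
    intro v hv
    rcases Finset.mem_union.mp hv with hA | hB
    · simp [merge, hA, hLA hA]
    · have h1 : v ∉ LA := Finset.disjoint_right.mp hdL hB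
      have h2 : v ∉ MA := Finset.disjoint_right.mp hd (hLB hB)
      simp [merge, h1, h2]
  simp_rw [e4] at e3
  have hIH : ∑ i, marg p (LA ∪ LB) i * h i = ∑ i, marg p LA i * marg p LB i * h i := by
    apply Finset.sum_congr rfl
    intro i _
    rw [IH i]
  have hNpos : (0:ℝ) < ∏ v ∈ (LA ∪ LB)ᶜ, (b v : ℝ) := by
    apply Finset.prod_pos
    intro v _
    exact_mod_cast hb v
  have e5 : ∑ k, p k * h k = ∑ k, ∑ j, p k * p j * h (merge MA k j) := by
    have := hIH
    rw [e2, e3] at this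
    exact mul_left_cancel₀ (ne_of_gt hNpos) this
  have e6 := split p hd h hhM
  rw [e1, e6, ← e5]

lemma alt_interval {K M : Finset V} (hK : K ⊆ M) :
    (∑ L ∈ M.powerset, if K ⊆ L then ((-1:ℝ)) ^ (L.card - K.card) else 0)
      = if K = M then 1 else 0 := by
  rw [Finset.sum_ite, Finset.sum_const_zero, add_zero]
  have hbij : ∑ L ∈ M.powerset.filter (fun L => K ⊆ L), ((-1:ℝ)) ^ (L.card - K.card)
      = ∑ J ∈ (M \ K).powerset, ((-1:ℝ)) ^ J.card := by
    apply Finset.sum_bij' (fun L _ => L \ K) (fun J _ => K ∪ J)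
    · intro L hL
      rw [Finset.mem_filter, Finset.mem_powerset] at hL
      rw [Finset.mem_powerset]
      exact Finset.sdiff_subset_sdiff hL.1 (le_refl K)
    · intro J hJ
      rw [Finset.mem_powerset] at hJ
      rw [Finset.mem_filter, Finset.mem_powerset]
      exact ⟨Finset.union_subset hK (hJ.trans (Finset.sdiff_subset)), Finset.subset_union_left⟩
    · intro L hL
      rw [Finset.mem_filter, Finset.mem_powerset] at hL
      exact Finset.union_sdiff_of_subset hL.2
    · intro J hJ
      rw [Finset.mem_powerset] at hJ
      have : Disjoint K J := Finset.disjoint_of_subset_right hJ Finset.disjoint_sdiff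
      rw [Finset.union_sdiff_cancel_left this]
    · intro L hL
      rw [Finset.mem_filter, Finset.mem_powerset] at hL
      rw [Finset.card_sdiff_of_subset hL.2]
  rw [hbij]
  have h2 : (∑ J ∈ (M \ K).powerset, ((-1:ℝ)) ^ J.card) = if M \ K = ∅ then 1 else 0 := by
    have h := Finset.sum_powerset_neg_one_pow_card (x := M \ K)
    have h3 := congrArg (fun z : ℤ => (z : ℝ)) h
    push_cast at h3
    simpa using h3
  rw [h2]
  congr 1
  rw [Finset.sdiff_eq_empty_iff_subset]
  apply propext
  constructor
  · intro h; exact Finset.Subset.antisymm hK h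
  · intro h; rw [h]

/-- Möbius inversion identity -/
lemma moebius (hb : ∀ v, 0 < b v) (M : Finset V) (u : ((v : V) → Fin (b v)) → ℝ)
    (hu : ∀ i j, (∀ v ∈ M, i v = j v) → u i = u j) (i : (v : V) → Fin (b v)) :
    (∑ L ∈ M.powerset, ∑ K ∈ L.powerset, (-1:ℝ) ^ (L.card - K.card) * u (base hb K i))
      = u i := by
  have expand : ∀ L ∈ M.powerset,
      (∑ K ∈ L.powerset, (-1:ℝ) ^ (L.card - K.card) * u (base hb K i))
        = ∑ K ∈ M.powerset, if K ⊆ L then (-1:ℝ) ^ (L.card - K.card) * u (base hb K i) else 0 := by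
    intro L hL
    rw [Finset.mem_powerset] at hL
    rw [Finset.sum_ite, Finset.sum_const_zero, add_zero]
    apply Finset.sum_congr
    · ext K
      simp only [Finset.mem_filter, Finset.mem_powerset]
      constructor
      · intro h; exact ⟨h.trans hL, h⟩
      · intro h; exact h.2
    · intros; rfl
  rw [Finset.sum_congr rfl expand, Finset.sum_comm]
  have inner : ∀ K ∈ M.powerset,
      (∑ L ∈ M.powerset, if K ⊆ L then (-1:ℝ) ^ (L.card - K.card) * u (base hb K i) else 0)
        = (if K = M then 1 else 0) * u (base hb K i) := by
    intro K hK
    rw [Finset.mem_powerset] at hK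
    have : ∀ L, (if K ⊆ L then (-1:ℝ) ^ (L.card - K.card) * u (base hb K i) else 0)
        = (if K ⊆ L then (-1:ℝ) ^ (L.card - K.card) else 0) * u (base hb K i) := by
      intro L; split_ifs <;> simp
    simp_rw [this]
    rw [← Finset.sum_mul, alt_interval hK]
  rw [Finset.sum_congr rfl inner]
  have : ∀ K ∈ M.powerset, (if K = M then 1 else 0) * u (base hb K i)
      = if K = M then u (base hb K i) else 0 := by
    intro K _; split_ifs <;> simp
  rw [Finset.sum_congr rfl this, Finset.sum_ite_eq' M.powerset M (fun K => u (base hb K i))]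
  rw [if_pos (Finset.mem_powerset.mpr (le_refl M))]
  apply hu
  intro v hv
  simp [base, hv]

/-- vanishing of the top alternating sum for a function invariant on a proper margin -/
lemma vanish (hb : ∀ v, 0 < b v) {M S : Finset V} (u : ((v : V) → Fin (b v)) → ℝ)
    (hu : ∀ i j, (∀ v ∈ S, i v = j v) → u i = u j) {w : V} (hwM : w ∈ M) (hwS : w ∉ S)
    (i : (v : V) → Fin (b v)) :
    (∑ K ∈ M.powerset, (-1:ℝ) ^ (M.card - K.card) * u (base hb K i)) = 0 := by
  obtain ⟨M', hwM', rfl⟩ : ∃ M', w ∉ M' ∧ M = insert w M' :=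
    ⟨M.erase w, Finset.notMem_erase _ _, (Finset.insert_erase hwM).symm⟩
  rw [Finset.sum_powerset_insert hwM']
  rw [← Finset.sum_add_distrib]
  apply Finset.sum_eq_zero
  intro t ht
  rw [Finset.mem_powerset] at ht
  have hwt : w ∉ t := fun h => hwM' (ht h)
  have hcard : (insert w M').card = M'.card + 1 := Finset.card_insert_of_notMem hwM'
  have hcardt : (insert w t).card = t.card + 1 := Finset.card_insert_of_notMem hwt
  have htM : t.card ≤ M'.card := Finset.card_le_card ht
  have hueq : u (base hb t i) = u (base hb (insert w t) i) := by
    apply hu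
    intro v hv
    have hvw : v ≠ w := fun h => hwS (h ▸ hv)
    unfold base
    by_cases hvt : v ∈ t
    · simp [hvt, Finset.mem_insert, hvt]
    · have : v ∉ insert w t := by
        rw [Finset.mem_insert]
        push_neg
        exact ⟨hvw, hvt⟩
      simp [hvt, this]
  rw [← hueq, hcard, hcardt]
  have hexp : M'.card + 1 - t.card = (M'.card - t.card) + 1 := by omega
  have hexp2 : M'.card + 1 - (t.card + 1) = M'.card - t.card := by omega
  rw [hexp, hexp2, pow_succ]
  ring

lemma keyineq {x y : ℝ} (hx : 0 < x) (hy : 0 < y) :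
    0 ≤ (x - y) * (Real.log x - Real.log y) := by
  rcases le_total y x with h | h
  · exact mul_nonneg (sub_nonneg.mpr h) (sub_nonneg.mpr (Real.log_le_log hy h))
  · have h2 : Real.log x ≤ Real.log y := Real.log_le_log hx h
    nlinarith

lemma keyeq {x y : ℝ} (hx : 0 < x) (hy : 0 < y)
    (h : (x - y) * (Real.log x - Real.log y) = 0) : x = y := by
  by_contra hne
  rcases lt_or_gt_of_ne hne with hlt | hgt
  · have := mul_pos_of_neg_of_neg (sub_neg.mpr hlt) (sub_neg.mpr (Real.log_lt_log hx hlt))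
    linarith
  · have := mul_pos (sub_pos.mpr hgt) (sub_pos.mpr (Real.log_lt_log hy hgt))
    linarith

end Aux

section Main
set_option linter.unusedSectionVars false
variable {V : Type*} [Fintype V] [DecidableEq V] {b : V → ℕ}

lemma main_lemma (hb : ∀ v, 0 < b v) (p : ((v : V) → Fin (b v)) → ℝ)
    (hpos : ∀ i, 0 < p i) (hsum : ∑ i, p i = 1)
    (A B : Finset V) (hdisj : Disjoint A B) (hcover : A ∪ B = Finset.univ)
    (hzero : ∀ M : Finset V, (M ∩ A).Nonempty → (M ∩ B).Nonempty →
      ∀ i, mlogit hb p M i = 0) :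
    ∀ (n : ℕ) (M : Finset V), M.card ≤ n → ∀ i,
      marg p M i = marg p (M ∩ A) i * marg p (M ∩ B) i := by
  intro n
  induction n with
  | zero =>
    intro M hM i
    have hM0 : M = ∅ := Finset.card_eq_zero.mp (Nat.le_zero.mp hM)
    subst hM0
    simp [Finset.empty_inter, marg_empty hsum]
  | succ n IHn =>
    intro M hM i
    by_cases hA : M ∩ A = ∅
    · have hMB : M ∩ B = M := by
        rw [Finset.inter_eq_left]
        intro v hv
        have hvu : v ∈ A ∪ B := by rw [hcover]; exact Finset.mem_univ v
        rcases Finset.mem_union.mp hvu with h | h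
        · exact absurd (Finset.mem_inter.mpr ⟨hv, h⟩)
            (by rw [hA]; exact Finset.notMem_empty v)
        · exact h
      rw [hA, hMB, marg_empty hsum, one_mul]
    · by_cases hB : M ∩ B = ∅
      · have hMA : M ∩ A = M := by
          rw [Finset.inter_eq_left]
          intro v hv
          have hvu : v ∈ A ∪ B := by rw [hcover]; exact Finset.mem_univ v
          rcases Finset.mem_union.mp hvu with h | h
          · exact h
          · exact absurd (Finset.mem_inter.mpr ⟨hv, h⟩)
              (by rw [hB]; exact Finset.notMem_empty v)
        rw [hB, hMA, marg_empty hsum, mul_one]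
      · have hAne : (M ∩ A).Nonempty := Finset.nonempty_iff_ne_empty.mpr hA
        have hBne : (M ∩ B).Nonempty := Finset.nonempty_iff_ne_empty.mpr hB
        have hdM : Disjoint (M ∩ A) (M ∩ B) :=
          Finset.disjoint_of_subset_left Finset.inter_subset_right
            (Finset.disjoint_of_subset_right Finset.inter_subset_right hdisj)
        have hMun : (M ∩ A) ∪ (M ∩ B) = M := by
          rw [← Finset.inter_union_distrib_left, hcover, Finset.inter_univ]
        have hfinv : ∀ i1 j1 : (v : V) → Fin (b v), (∀ v ∈ M, i1 v = j1 v) →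
            Real.log (marg p M i1) = Real.log (marg p M j1) := fun i1 j1 h => by
          rw [marg_congr p M h]
        have hginv : ∀ i1 j1 : (v : V) → Fin (b v), (∀ v ∈ M, i1 v = j1 v) →
            Real.log (marg p (M ∩ A) i1 * marg p (M ∩ B) i1)
              = Real.log (marg p (M ∩ A) j1 * marg p (M ∩ B) j1) := by
          intro i1 j1 h
          rw [marg_congr p (M ∩ A) (fun v hv => h v (Finset.inter_subset_left hv)),
              marg_congr p (M ∩ B) (fun v hv => h v (Finset.inter_subset_left hv))]
        have hFdec : ∀ j : (v : V) → Fin (b v), Real.log (marg p M j)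
            = ∑ L ∈ M.powerset, ∑ K ∈ L.powerset,
                (-1:ℝ) ^ (L.card - K.card) * Real.log (marg p M (base hb K j)) :=
          fun j => (moebius hb M (fun x => Real.log (marg p M x)) hfinv j).symm
        have hGdec : ∀ j : (v : V) → Fin (b v),
            Real.log (marg p (M ∩ A) j * marg p (M ∩ B) j)
            = ∑ L ∈ M.powerset, ∑ K ∈ L.powerset, (-1:ℝ) ^ (L.card - K.card) *
                Real.log (marg p (M ∩ A) (base hb K j) * marg p (M ∩ B) (base hb K j)) :=
          fun j => (moebius hb M
            (fun x => Real.log (marg p (M ∩ A) x * marg p (M ∩ B) x)) hginv j).symm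
        have hzeroL : ∀ L ∈ M.powerset,
            (∑ j : (v : V) → Fin (b v), (marg p M j - marg p (M ∩ A) j * marg p (M ∩ B) j) * ((∑ K ∈ L.powerset, (-1:ℝ) ^ (L.card - K.card) * Real.log (marg p M (base hb K j))) - (∑ K ∈ L.powerset, (-1:ℝ) ^ (L.card - K.card) * Real.log (marg p (M ∩ A) (base hb K j) * marg p (M ∩ B) (base hb K j))))) = 0 := by
          intro L hL
          rw [Finset.mem_powerset] at hL
          by_cases hLM : L = M
          · subst hLM
            apply Finset.sum_eq_zero
            intro j _
            have hF0 : (∑ K ∈ L.powerset,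
                (-1:ℝ) ^ (L.card - K.card) * Real.log (marg p L (base hb K j))) = 0 := by
              have hrfl : (∑ K ∈ L.powerset,
                  (-1:ℝ) ^ (L.card - K.card) * Real.log (marg p L (base hb K j)))
                    = mlogit hb p L j := rfl
              rw [hrfl]
              exact hzero L hAne hBne j
            have hG0 : (∑ K ∈ L.powerset, (-1:ℝ) ^ (L.card - K.card) *
                Real.log (marg p (L ∩ A) (base hb K j) * marg p (L ∩ B) (base hb K j))) = 0 := by
              have hlog : ∀ K : Finset V,
                  Real.log (marg p (L ∩ A) (base hb K j) * marg p (L ∩ B) (base hb K j))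
                    = Real.log (marg p (L ∩ A) (base hb K j))
                      + Real.log (marg p (L ∩ B) (base hb K j)) := fun K =>
                Real.log_mul (ne_of_gt (marg_pos hpos _ _)) (ne_of_gt (marg_pos hpos _ _))
              simp_rw [hlog, mul_add]
              rw [Finset.sum_add_distrib]
              obtain ⟨w, hw⟩ := hBne
              obtain ⟨w', hw'⟩ := hAne
              have hwM : w ∈ L := Finset.inter_subset_left hw
              have hwS : w ∉ L ∩ A := fun hx => Finset.disjoint_left.mp hdM hx hw
              have h1 := vanish hb (fun x => Real.log (marg p (L ∩ A) x))
                (fun i1 j1 h => congrArg Real.log (marg_congr p (L ∩ A) h)) hwM hwS j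
              have hw'M : w' ∈ L := Finset.inter_subset_left hw'
              have hw'S : w' ∉ L ∩ B := fun hx => Finset.disjoint_left.mp hdM hw' hx
              have h2 := vanish hb (fun x => Real.log (marg p (L ∩ B) x))
                (fun i1 j1 h => congrArg Real.log (marg_congr p (L ∩ B) h)) hw'M hw'S j
              rw [h1, h2, add_zero]
            rw [hF0, hG0]
            ring
          · have hLA : L ∩ A ⊆ M ∩ A := Finset.inter_subset_inter hL (Finset.Subset.refl A)
            have hLB : L ∩ B ⊆ M ∩ B := Finset.inter_subset_inter hL (Finset.Subset.refl B)
            have hLun : (L ∩ A) ∪ (L ∩ B) = L := by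
              rw [← Finset.inter_union_distrib_left, hcover, Finset.inter_univ]
            have hcardL : L.card ≤ n := by
              have hss : L ⊂ M := Finset.ssubset_iff_subset_ne.mpr ⟨hL, hLM⟩
              have := Finset.card_lt_card hss
              omega
            have IHL : ∀ i1, marg p ((L ∩ A) ∪ (L ∩ B)) i1
                = marg p (L ∩ A) i1 * marg p (L ∩ B) i1 := by
              intro i1
              rw [hLun]
              exact IHn L hcardL i1
            have hhinv : ∀ i1 j1 : (v : V) → Fin (b v),
                (∀ v ∈ (L ∩ A) ∪ (L ∩ B), i1 v = j1 v) →
                ((∑ K ∈ L.powerset, (-1:ℝ) ^ (L.card - K.card) * Real.log (marg p M (base hb K i1))) - (∑ K ∈ L.powerset, (-1:ℝ) ^ (L.card - K.card) * Real.log (marg p (M ∩ A) (base hb K i1) * marg p (M ∩ B) (base hb K i1)))) = ((∑ K ∈ L.powerset, (-1:ℝ) ^ (L.card - K.card) * Real.log (marg p M (base hb K j1))) - (∑ K ∈ L.powerset, (-1:ℝ) ^ (L.card - K.card) * Real.log (marg p (M ∩ A) (base hb K j1) * marg p (M ∩ B) (base hb K j1)))) := by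
              intro i1 j1 hagree
              have hagreeL : ∀ v ∈ L, i1 v = j1 v := fun v hv =>
                hagree v (by rw [hLun]; exact hv)
              have hbase : ∀ K ∈ L.powerset, base hb K i1 = base hb K j1 := fun K hK =>
                base_agree hb (Finset.mem_powerset.mp hK) hagreeL
              congr 1
              · apply Finset.sum_congr rfl
                intro K hK
                rw [hbase K hK]
              · apply Finset.sum_congr rfl
                intro K hK
                rw [hbase K hK]
            have hmm : (∑ j : (v : V) → Fin (b v), marg p M j * ((∑ K ∈ L.powerset, (-1:ℝ) ^ (L.card - K.card) * Real.log (marg p M (base hb K j))) - (∑ K ∈ L.powerset, (-1:ℝ) ^ (L.card - K.card) * Real.log (marg p (M ∩ A) (base hb K j) * marg p (M ∩ B) (base hb K j)))))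
                = ∑ j : (v : V) → Fin (b v),
                    marg p (M ∩ A) j * marg p (M ∩ B) j * ((∑ K ∈ L.powerset, (-1:ℝ) ^ (L.card - K.card) * Real.log (marg p M (base hb K j))) - (∑ K ∈ L.powerset, (-1:ℝ) ^ (L.card - K.card) * Real.log (marg p (M ∩ A) (base hb K j) * marg p (M ∩ B) (base hb K j)))) := by
              have := margmatch hb p hdM hLA hLB (fun j1 => ((∑ K ∈ L.powerset, (-1:ℝ) ^ (L.card - K.card) * Real.log (marg p M (base hb K j1))) - (∑ K ∈ L.powerset, (-1:ℝ) ^ (L.card - K.card) * Real.log (marg p (M ∩ A) (base hb K j1) * marg p (M ∩ B) (base hb K j1))))) hhinv IHL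
              rw [hMun] at this
              exact this
            simp_rw [sub_mul]
            rw [Finset.sum_sub_distrib, hmm, sub_self]
        have hD : (∑ j : (v : V) → Fin (b v), (marg p M j - marg p (M ∩ A) j * marg p (M ∩ B) j) *
            (Real.log (marg p M j) - Real.log (marg p (M ∩ A) j * marg p (M ∩ B) j))) = 0 := by
          have hdec : ∀ j : (v : V) → Fin (b v),
              Real.log (marg p M j) - Real.log (marg p (M ∩ A) j * marg p (M ∩ B) j)
                = ∑ L ∈ M.powerset, ((∑ K ∈ L.powerset, (-1:ℝ) ^ (L.card - K.card) * Real.log (marg p M (base hb K j))) - (∑ K ∈ L.powerset, (-1:ℝ) ^ (L.card - K.card) * Real.log (marg p (M ∩ A) (base hb K j) * marg p (M ∩ B) (base hb K j)))) := by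
            intro j
            rw [Finset.sum_sub_distrib, ← hFdec j, ← hGdec j]
          simp_rw [hdec, Finset.mul_sum]
          rw [Finset.sum_comm]
          apply Finset.sum_eq_zero
          intro L hL
          exact hzeroL L hL
        have hnn : ∀ j ∈ (Finset.univ : Finset ((v : V) → Fin (b v))),
            0 ≤ (marg p M j - marg p (M ∩ A) j * marg p (M ∩ B) j) *
              (Real.log (marg p M j) - Real.log (marg p (M ∩ A) j * marg p (M ∩ B) j)) :=
          fun j _ => keyineq (marg_pos hpos M j)
            (mul_pos (marg_pos hpos (M ∩ A) j) (marg_pos hpos (M ∩ B) j))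
        have hz := (Finset.sum_eq_zero_iff_of_nonneg hnn).mp hD i (Finset.mem_univ i)
        exact keyeq (marg_pos hpos M i)
          (mul_pos (marg_pos hpos (M ∩ A) i) (marg_pos hpos (M ∩ B) i)) hz

end Main

/-- conversely, if `{A, B}` partitions `V` and for every `M` intersecting
both `A` and `B` the multivariate logistic parameter `η^M = λ^M_M` vanishes identically,
then `X_A ⊥ X_B`. -/
theorem stmt10 {V : Type*} [Fintype V] [DecidableEq V] {b : V → ℕ} (hb : ∀ v, 0 < b v)
    (p : ((v : V) → Fin (b v)) → ℝ) (hpos : ∀ i, 0 < p i) (hsum : ∑ i, p i = 1)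
    (A B : Finset V) (hdisj : Disjoint A B) (hcover : A ∪ B = Finset.univ)
    (hzero : ∀ M : Finset V, (M ∩ A).Nonempty → (M ∩ B).Nonempty →
      ∀ i, mlogit hb p M i = 0) :
    ∀ i, p i = marg p A i * marg p B i := by
  intro i
  have h := main_lemma hb p hpos hsum A B hdisj hcover hzero
    (Finset.univ : Finset V).card Finset.univ (le_refl _) i
  rw [marg_univ, Finset.univ_inter, Finset.univ_inter] at h
  exact h
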